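/- Define the coproduct on the P-basis by Δ(P_λ) = Σ P_{st_A(λ|_A)} ⊗ P_{st_{A^c}(λ|_{A^c})}, summing over all A ⊆ [n] such that λ = λ|_A ⊔ λ|_{A^c} (i.e., every arc of λ has both endpoints in ±A or both in ±A^c). Then Δ is coassociative: (Δ ⊗ id) ∘ Δ = (id ⊗ Δ) ∘ Δ on SC^D. -/

import Mathlib

open Finset
open scoped Classical

noncomputable section

/-- A labelled arc `(i, j, a)` on `[±n]` with label `a`. -/
abbrev Arc (F : Type*) := ℤ × ℤ × F

/-- Position of `i ∈ [±n] = {1,…,n,-n,…,-1}` in the total order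
`1 ≺ ⋯ ≺ n ≺ -n ≺ ⋯ ≺ -1` (so `posD n i = i` for `i > 0` and
`posD n (-m) = 2n + 1 - m`). -/
def posD (n : ℕ) (i : ℤ) : ℤ := if 0 < i then i else 2 * n + 1 + i

/-- `λ` is a `D_{2n}(q)`-partition of `[±n]`: a set of labelled arcs `(i,j,a)` with
`i, j ∈ [±n]`, `i ≺ j`, `j ≠ -i`, `a ≠ 0`, closed under the symmetry
`(i,j,a) ↦ (-j,-i,-a)`, and such that no arc `(i,k,b)` or `(k,j,b)` with
`i ≺ k ≺ j` coexists with an arc `(i,j,a)`. -/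
def IsDPartition {F : Type*} [Field F] (n : ℕ) (lam : Finset (Arc F)) : Prop :=
  ∀ i j a, (i, j, a) ∈ lam →
    1 ≤ |i| ∧ |i| ≤ (n : ℤ) ∧ 1 ≤ |j| ∧ |j| ≤ (n : ℤ) ∧ a ≠ 0 ∧
    posD n i < posD n j ∧ j ≠ -i ∧ (-j, -i, -a) ∈ lam ∧
    ∀ k b, posD n i < posD n k → posD n k < posD n j →
      (i, k, b) ∉ lam ∧ (k, j, b) ∉ lam

/-- Rank of `i` in a finite set `A ⊆ [n]` of positive integers:
the number of elements of `A` that are `≤ i`. -/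
def rankIn (A : Finset ℤ) (i : ℤ) : ℤ := ((A.filter (· ≤ i)).card : ℤ)

/-- The standardization map `st_A : ±A → [±|A|]`, the unique order-preserving
relabelling (extended arbitrarily off `±A`). -/
def stMap (A : Finset ℤ) (i : ℤ) : ℤ := if 0 < i then rankIn A i else -(rankIn A (-i))

/-- Standardization applied to a labelled arc. -/
def stArc {F : Type*} (A : Finset ℤ) : Arc F → Arc F :=
  fun t => (stMap A t.1, stMap A t.2.1, t.2.2)

/-- `λ|_A`: the arcs of `λ` with both endpoints in `±A = A ∪ (-A)`. -/
def restrictTo {F : Type*} (A : Finset ℤ) (lam : Finset (Arc F)) : Finset (Arc F) :=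
  lam.filter (fun t => |t.1| ∈ A ∧ |t.2.1| ∈ A)

/-- Relabel all arcs of `λ` via `st_A`. -/
def standardize {F : Type*} (A : Finset ℤ) (lam : Finset (Arc F)) : Finset (Arc F) :=
  lam.image (stArc A)

/-- Every arc of `λ` has both endpoints in `±A` or both in `±Aᶜ`,
i.e. `λ = λ|_A ⊔ λ|_{Aᶜ}`. -/
def Splits {F : Type*} (A : Finset ℤ) (lam : Finset (Arc F)) : Prop :=
  ∀ t ∈ lam, (|t.1| ∈ A ↔ |t.2.1| ∈ A)

variable (F : Type*) [Field F] [Fintype F]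

/-- All possible labelled arcs on `[±n]`. -/
def allArcs (n : ℕ) : Finset (Arc F) :=
  Icc (-(n : ℤ)) (n : ℤ) ×ˢ Icc (-(n : ℤ)) (n : ℤ) ×ˢ (Finset.univ : Finset F)

/-- `SC^D = ⊕_{n ≥ 0} SC^D_{2n}`: the free graded `ℂ`-vector space with basis
`{κ_λ : λ ∈ D_{2n}(q), n ≥ 0}`. -/
abbrev SCtot := (Σ n : ℕ, {lam : Finset (Arc F) // IsDPartition n lam}) →₀ ℂ

/-- `P_λ = Σ_{μ ≥ λ} κ_μ ∈ SC^D_{2n}`, where `μ` runs over the `D_{2n}(q)`-partitions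
whose arc set contains the arc set of `λ`. -/
def Pelt (n : ℕ) (lam : Finset (Arc F)) : SCtot F :=
  ∑ mu ∈ (allArcs F n).powerset,
    if h : IsDPartition n mu ∧ lam ⊆ mu then
      Finsupp.single ⟨n, ⟨mu, h.1⟩⟩ (1 : ℂ) else 0

open scoped TensorProduct

noncomputable instance : Zero (SCtot F ⊗[ℂ] SCtot F) :=
  (inferInstance : AddCommMonoid (SCtot F ⊗[ℂ] SCtot F)).toAddMonoid.toZero

noncomputable instance : Zero ((SCtot F ⊗[ℂ] SCtot F) ⊗[ℂ] SCtot F) :=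
  (inferInstance : AddCommMonoid ((SCtot F ⊗[ℂ] SCtot F) ⊗[ℂ] SCtot F)).toAddMonoid.toZero

noncomputable instance : Zero (SCtot F ⊗[ℂ] (SCtot F ⊗[ℂ] SCtot F)) :=
  (inferInstance : AddCommMonoid (SCtot F ⊗[ℂ] (SCtot F ⊗[ℂ] SCtot F))).toAddMonoid.toZero

/-- The coproduct on the `P`-basis:
`Δ(P_λ) = Σ_{A ⊆ [n], λ = λ|_A ⊔ λ|_{Aᶜ}} P_{st_A(λ|_A)} ⊗ P_{st_{Aᶜ}(λ|_{Aᶜ})}`. -/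
def DeltaP (n : ℕ) (lam : Finset (Arc F)) : SCtot F ⊗[ℂ] SCtot F :=
  ∑ A ∈ (Icc 1 (n : ℤ)).powerset,
    if Splits A lam then
      Pelt F A.card (standardize A (restrictTo A lam)) ⊗ₜ[ℂ]
        Pelt F (n - A.card)
          (standardize (Icc 1 (n : ℤ) \ A) (restrictTo (Icc 1 (n : ℤ) \ A) lam))
    else (0 : SCtot F ⊗[ℂ] SCtot F)

section AuxRank

variable {A A1 B : Finset ℤ} {a b : ℤ}

lemma rankIn_lt_rankIn (ha : a ∈ A) (hba : b < a) : rankIn A b < rankIn A a := by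
  unfold rankIn
  have hsub : A.filter (· ≤ b) ⊆ A.filter (· ≤ a) := by
    intro x hx
    simp only [Finset.mem_filter] at hx ⊢
    exact ⟨hx.1, hx.2.trans hba.le⟩
  have : A.filter (· ≤ b) ⊂ A.filter (· ≤ a) := by
    refine (Finset.ssubset_iff_of_subset hsub).mpr ⟨a, ?_, ?_⟩
    · simp [Finset.mem_filter, ha]
    · simp [Finset.mem_filter, ha]
      omega
  exact_mod_cast Finset.card_lt_card this

lemma rankIn_le_rankIn_iff (ha : a ∈ A) (hb : b ∈ A) :
    rankIn A a ≤ rankIn A b ↔ a ≤ b := by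
  constructor
  · intro hle
    by_contra hab
    push_neg at hab
    exact absurd hle (not_le.mpr (rankIn_lt_rankIn ha hab))
  · intro hab
    rcases eq_or_lt_of_le hab with rfl | hlt
    · exact le_refl _
    · exact (rankIn_lt_rankIn hb hlt).le

lemma rankIn_injOn (ha : a ∈ A) (hb : b ∈ A) (h : rankIn A a = rankIn A b) : a = b := by
  by_contra hne
  rcases lt_or_gt_of_ne hne with hlt | hlt
  · exact absurd (rankIn_lt_rankIn hb hlt) (by omega)
  · exact absurd (rankIn_lt_rankIn ha hlt) (by omega)

lemma one_le_rankIn (ha : a ∈ A) : 1 ≤ rankIn A a := by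
  unfold rankIn
  have : a ∈ A.filter (· ≤ a) := by simp [ha]
  have := Finset.card_pos.mpr ⟨a, this⟩
  omega

lemma rankIn_le_card (a : ℤ) : rankIn A a ≤ (A.card : ℤ) := by
  unfold rankIn
  exact_mod_cast Finset.card_filter_le _ _

lemma rankIn_mem_Icc (ha : a ∈ A) : rankIn A a ∈ Finset.Icc 1 (A.card : ℤ) := by
  simp [Finset.mem_Icc, one_le_rankIn ha, rankIn_le_card a]

lemma image_rankIn : A.image (rankIn A) = Finset.Icc 1 (A.card : ℤ) := by
  have hsub : A.image (rankIn A) ⊆ Finset.Icc 1 (A.card : ℤ) := by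
    intro m hm
    obtain ⟨a, ha, rfl⟩ := Finset.mem_image.mp hm
    exact rankIn_mem_Icc ha
  have hcard : (A.image (rankIn A)).card = A.card :=
    Finset.card_image_of_injOn fun x hx y hy => rankIn_injOn hx hy
  refine Finset.eq_of_subset_of_card_le hsub ?_
  rw [hcard]
  rw [Int.card_Icc]
  simp

lemma mem_image_rankIn_iff (h1 : A1 ⊆ A) (ha : a ∈ A) :
    rankIn A a ∈ A1.image (rankIn A) ↔ a ∈ A1 := by
  constructor
  · intro hm
    obtain ⟨b, hb, he⟩ := Finset.mem_image.mp hm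
    rwa [rankIn_injOn (h1 hb) ha he] at hb
  · intro hm
    exact Finset.mem_image_of_mem _ hm

lemma rankIn_image (h1 : A1 ⊆ A) (ha : a ∈ A) :
    rankIn (A1.image (rankIn A)) (rankIn A a) = rankIn A1 a := by
  have key : (A1.image (rankIn A)).filter (· ≤ rankIn A a)
      = (A1.filter (· ≤ a)).image (rankIn A) := by
    ext m
    simp only [Finset.mem_filter, Finset.mem_image]
    constructor
    · rintro ⟨⟨b, hb, rfl⟩, hle⟩
      exact ⟨b, ⟨hb, (rankIn_le_rankIn_iff (h1 hb) ha).mp hle⟩, rfl⟩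
    · rintro ⟨b, ⟨hb, hba⟩, rfl⟩
      exact ⟨⟨b, hb, rfl⟩, (rankIn_le_rankIn_iff (h1 hb) ha).mpr hba⟩
  have hinj : Set.InjOn (rankIn A) (A1.filter (· ≤ a)) := by
    intro x hx y hy
    simp only [Finset.coe_filter, Set.mem_setOf_eq] at hx hy
    exact rankIn_injOn (h1 hx.1) (h1 hy.1)
  have := congrArg Finset.card key
  rw [Finset.card_image_of_injOn hinj] at this
  unfold rankIn
  exact_mod_cast this

lemma card_image_rankIn (h1 : A1 ⊆ A) : (A1.image (rankIn A)).card = A1.card :=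
  Finset.card_image_of_injOn fun x hx y hy => rankIn_injOn (h1 hx) (h1 hy)

lemma image_rankIn_sdiff (h1 : A1 ⊆ A) :
    (A \ A1).image (rankIn A) = Finset.Icc 1 (A.card : ℤ) \ A1.image (rankIn A) := by
  ext m
  rw [← image_rankIn (A := A)]
  simp only [Finset.mem_image, Finset.mem_sdiff]
  constructor
  · rintro ⟨a, ⟨ha, hna⟩, rfl⟩
    refine ⟨⟨a, ha, rfl⟩, ?_⟩
    rintro ⟨b, hb, he⟩
    exact hna (rankIn_injOn (h1 hb) ha he ▸ hb)
  · rintro ⟨⟨a, ha, rfl⟩, hnot⟩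
    exact ⟨a, ⟨ha, fun hx => hnot ⟨a, hx, rfl⟩⟩, rfl⟩

lemma up_sub (hB : B ⊆ Finset.Icc 1 (A.card : ℤ)) :
    (A.filter (fun a => rankIn A a ∈ B)).image (rankIn A) = B := by
  ext m
  simp only [Finset.mem_image, Finset.mem_filter]
  constructor
  · rintro ⟨a, ⟨_, hmem⟩, rfl⟩
    exact hmem
  · intro hm
    have : m ∈ A.image (rankIn A) := by rw [image_rankIn]; exact hB hm
    obtain ⟨a, ha, rfl⟩ := Finset.mem_image.mp this
    exact ⟨a, ⟨ha, hm⟩, rfl⟩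

lemma sub_up (h1 : A1 ⊆ A) :
    A.filter (fun a => rankIn A a ∈ A1.image (rankIn A)) = A1 := by
  ext a
  simp only [Finset.mem_filter]
  constructor
  · rintro ⟨ha, hm⟩
    exact (mem_image_rankIn_iff h1 ha).mp hm
  · intro ha
    exact ⟨h1 ha, (mem_image_rankIn_iff h1 (h1 ha)).mpr ha⟩

end AuxRank
section AuxSt

variable {F : Type*} {A A1 : Finset ℤ} {i : ℤ}

lemma stMap_comp (hpos : ∀ x ∈ A, 0 < x) (h1 : A1 ⊆ A) (hi : |i| ∈ A1) :
    stMap (A1.image (rankIn A)) (stMap A i) = stMap A1 i := by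
  have hiA : |i| ∈ A := h1 hi
  have hipos : 0 < |i| := hpos _ hiA
  rcases lt_trichotomy i 0 with hneg | rfl | hposi
  · have habs : |i| = -i := abs_of_neg hneg
    rw [habs] at hi hiA
    have h1r : 1 ≤ rankIn A (-i) := one_le_rankIn hiA
    simp only [stMap, if_neg (by omega : ¬ (0:ℤ) < i)]
    rw [if_neg (by omega), neg_neg, rankIn_image h1 hiA]
  · simp at hipos
  · have habs : |i| = i := abs_of_pos hposi
    rw [habs] at hi hiA
    have h1r : 1 ≤ rankIn A i := one_le_rankIn hiA
    simp only [stMap, if_pos hposi]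
    rw [if_pos (by omega), rankIn_image h1 hiA]

lemma abs_stMap (hpos : ∀ x ∈ A, 0 < x) (hi : |i| ∈ A) : |stMap A i| = rankIn A |i| := by
  have hipos : 0 < |i| := hpos _ hi
  have h1r : 1 ≤ rankIn A |i| := one_le_rankIn hi
  rcases lt_trichotomy i 0 with hneg | rfl | hposi
  · have habs : |i| = -i := abs_of_neg hneg
    rw [habs] at hi h1r ⊢
    simp only [stMap, if_neg (by omega : ¬ (0:ℤ) < i)]
    rw [abs_neg, abs_of_pos (by omega)]
  · simp at hipos
  · have habs : |i| = i := abs_of_pos hposi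
    rw [habs] at hi h1r ⊢
    simp only [stMap, if_pos hposi]
    rw [abs_of_pos (by omega)]

lemma restrict_standardize (hpos : ∀ x ∈ A, 0 < x) (h1 : A1 ⊆ A) (lam : Finset (Arc F)) :
    restrictTo (A1.image (rankIn A)) (standardize A (restrictTo A lam))
      = standardize A (restrictTo A1 lam) := by
  unfold restrictTo standardize
  rw [Finset.filter_image, Finset.filter_filter]
  congr 1
  apply Finset.filter_congr
  intro t _
  simp only [stArc]
  constructor
  · rintro ⟨⟨hA1, hA2⟩, hB1, hB2⟩
    rw [abs_stMap hpos hA1, mem_image_rankIn_iff h1 hA1] at hB1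
    rw [abs_stMap hpos hA2, mem_image_rankIn_iff h1 hA2] at hB2
    exact ⟨hB1, hB2⟩
  · rintro ⟨hB1, hB2⟩
    refine ⟨⟨h1 hB1, h1 hB2⟩, ?_, ?_⟩
    · rw [abs_stMap hpos (h1 hB1), mem_image_rankIn_iff h1 (h1 hB1)]; exact hB1
    · rw [abs_stMap hpos (h1 hB2), mem_image_rankIn_iff h1 (h1 hB2)]; exact hB2

lemma standardize_restrict_comp (hpos : ∀ x ∈ A, 0 < x) (h1 : A1 ⊆ A) (lam : Finset (Arc F)) :
    standardize (A1.image (rankIn A))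
        (restrictTo (A1.image (rankIn A)) (standardize A (restrictTo A lam)))
      = standardize A1 (restrictTo A1 lam) := by
  rw [restrict_standardize hpos h1 lam]
  unfold standardize
  rw [Finset.image_image]
  apply Finset.image_congr
  intro t ht
  simp only [Finset.coe_filter, Set.mem_setOf_eq, restrictTo, Finset.mem_filter] at ht
  simp only [Function.comp_apply, stArc]
  rw [stMap_comp hpos h1 ht.2.1, stMap_comp hpos h1 ht.2.2]

lemma splits_image_iff (hpos : ∀ x ∈ A, 0 < x) (h1 : A1 ⊆ A) (lam : Finset (Arc F)) :
    Splits (A1.image (rankIn A)) (standardize A (restrictTo A lam)) ↔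
      ∀ t ∈ lam, |t.1| ∈ A → |t.2.1| ∈ A → (|t.1| ∈ A1 ↔ |t.2.1| ∈ A1) := by
  unfold Splits standardize restrictTo
  constructor
  · intro hs t ht hA1 hA2
    have := hs (stArc A t) (Finset.mem_image_of_mem _ (Finset.mem_filter.mpr ⟨ht, hA1, hA2⟩))
    rwa [show (stArc A t).1 = stMap A t.1 from rfl,
      show (stArc A t).2.1 = stMap A t.2.1 from rfl,
      abs_stMap hpos hA1, abs_stMap hpos hA2,
      mem_image_rankIn_iff h1 hA1, mem_image_rankIn_iff h1 hA2] at this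
  · intro hs t ht
    obtain ⟨u, hu, rfl⟩ := Finset.mem_image.mp ht
    obtain ⟨hu0, hA1, hA2⟩ := Finset.mem_filter.mp hu
    rw [show (stArc A u).1 = stMap A u.1 from rfl,
      show (stArc A u).2.1 = stMap A u.2.1 from rfl,
      abs_stMap hpos hA1, abs_stMap hpos hA2,
      mem_image_rankIn_iff h1 hA1, mem_image_rankIn_iff h1 hA2]
    exact hs u hu0 hA1 hA2

end AuxSt
lemma cls_iff_left {x1 x2 y1 y2 u v : Prop}
    (hu : u ↔ x1 ∨ x2) (hv : v ↔ y1 ∨ y2) (d1 : ¬(x1 ∧ x2)) (d2 : ¬(y1 ∧ y2)) :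
    ((u ↔ v) ∧ (u → v → (x1 ↔ y1))) ↔
      (x1 ∧ y1 ∨ x2 ∧ y2 ∨ (¬x1 ∧ ¬x2 ∧ ¬y1 ∧ ¬y2)) := by tauto

lemma cls_iff_right {u v p q : Prop} (d1 : p → ¬u) (d2 : q → ¬v) :
    ((u ↔ v) ∧ (¬u → ¬v → (p ↔ q))) ↔
      (u ∧ v ∨ p ∧ q ∨ (¬u ∧ ¬p ∧ ¬v ∧ ¬q)) := by tauto

/-- Every arc of `λ` has both endpoints in one of the three classes
`±A1`, `±A2`, or the rest. -/
def Splits3 {F : Type*} (A1 A2 : Finset ℤ) (lam : Finset (Arc F)) : Prop :=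
  ∀ t ∈ lam, (|t.1| ∈ A1 ∧ |t.2.1| ∈ A1) ∨ (|t.1| ∈ A2 ∧ |t.2.1| ∈ A2) ∨
    (|t.1| ∉ A1 ∧ |t.1| ∉ A2 ∧ |t.2.1| ∉ A1 ∧ |t.2.1| ∉ A2)

set_option synthInstance.maxHeartbeats 1000000

section Expand

variable {F : Type*} [Field F] [Fintype F]

lemma expand_left (c : Prop) [Decidable c] (s : Finset (Finset ℤ))
    (f : Finset ℤ → Prop) [DecidablePred f]
    (X Y : Finset ℤ → SCtot F) (Z : SCtot F) :
    (TensorProduct.assoc ℂ (SCtot F) (SCtot F) (SCtot F))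
      ((if c then (∑ b ∈ s, if f b then X b ⊗ₜ[ℂ] Y b else 0) ⊗ₜ[ℂ] Z
        else (0 : (SCtot F ⊗[ℂ] SCtot F) ⊗[ℂ] SCtot F)))
    = ∑ b ∈ s, if c ∧ f b then X b ⊗ₜ[ℂ] (Y b ⊗ₜ[ℂ] Z)
        else (0 : SCtot F ⊗[ℂ] (SCtot F ⊗[ℂ] SCtot F)) := by
  by_cases hc : c
  · rw [if_pos hc, TensorProduct.sum_tmul, map_sum]
    refine Finset.sum_congr rfl fun b _ => ?_
    by_cases hf : f b
    · rw [if_pos hf, if_pos ⟨hc, hf⟩, TensorProduct.assoc_tmul]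
    · rw [if_neg hf, if_neg (fun hx => hf hx.2), TensorProduct.zero_tmul, map_zero]
  · rw [if_neg hc]
    rw [map_zero]
    symm
    refine Finset.sum_eq_zero fun b _ => ?_
    rw [if_neg (fun hx => hc hx.1)]

lemma expand_right (c : Prop) [Decidable c] (s : Finset (Finset ℤ))
    (f : Finset ℤ → Prop) [DecidablePred f]
    (X : SCtot F) (Y Z : Finset ℤ → SCtot F) :
    (if c then X ⊗ₜ[ℂ] (∑ b ∈ s, if f b then Y b ⊗ₜ[ℂ] Z b else 0)
      else (0 : SCtot F ⊗[ℂ] (SCtot F ⊗[ℂ] SCtot F)))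
    = ∑ b ∈ s, if c ∧ f b then X ⊗ₜ[ℂ] (Y b ⊗ₜ[ℂ] Z b)
        else (0 : SCtot F ⊗[ℂ] (SCtot F ⊗[ℂ] SCtot F)) := by
  by_cases hc : c
  · rw [if_pos hc, TensorProduct.tmul_sum]
    refine Finset.sum_congr rfl fun b _ => ?_
    by_cases hf : f b
    · rw [if_pos hf, if_pos ⟨hc, hf⟩]
    · rw [if_neg hf, if_neg (fun hx => hf hx.2), TensorProduct.tmul_zero]
  · rw [if_neg hc]
    symm
    refine Finset.sum_eq_zero fun b _ => ?_
    rw [if_neg (fun hx => hc hx.1)]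

end Expand
set_option maxHeartbeats 4000000 in
/-- the coproduct `Δ` is coassociative:
`(Δ ⊗ id) ∘ Δ = (id ⊗ Δ) ∘ Δ` on `SC^D` (stated on the `P`-basis elements, which
suffices by linearity, with the two sides compared via the associator of tensor
products). -/
theorem DeltaP_coassoc (n : ℕ) (lam : Finset (Arc F)) (h : IsDPartition n lam) :
    (TensorProduct.assoc ℂ (SCtot F) (SCtot F) (SCtot F))
      (∑ A ∈ (Icc 1 (n : ℤ)).powerset,
        if Splits A lam then
          DeltaP F A.card (standardize A (restrictTo A lam)) ⊗ₜ[ℂ]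
            Pelt F (n - A.card)
              (standardize (Icc 1 (n : ℤ) \ A) (restrictTo (Icc 1 (n : ℤ) \ A) lam))
        else (0 : (SCtot F ⊗[ℂ] SCtot F) ⊗[ℂ] SCtot F))
    = ∑ A ∈ (Icc 1 (n : ℤ)).powerset,
        if Splits A lam then
          Pelt F A.card (standardize A (restrictTo A lam)) ⊗ₜ[ℂ]
            DeltaP F (n - A.card)
              (standardize (Icc 1 (n : ℤ) \ A) (restrictTo (Icc 1 (n : ℤ) \ A) lam))
        else (0 : SCtot F ⊗[ℂ] (SCtot F ⊗[ℂ] SCtot F)) := by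
  classical
  have hIcard : (Icc 1 (n : ℤ)).card = n := by rw [Int.card_Icc]; simp
  have hIpos : ∀ x ∈ Icc 1 (n : ℤ), (0 : ℤ) < x := by
    intro x hx; rw [mem_Icc] at hx; omega
  have harcs : ∀ t ∈ lam, |t.1| ∈ Icc 1 (n : ℤ) ∧ |t.2.1| ∈ Icc 1 (n : ℤ) := by
    intro t ht
    obtain ⟨i, j, a⟩ := t
    obtain ⟨h1, h2, h3, h4, -⟩ := h i j a ht
    exact ⟨mem_Icc.mpr ⟨h1, h2⟩, mem_Icc.mpr ⟨h3, h4⟩⟩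
  have hL :
      (TensorProduct.assoc ℂ (SCtot F) (SCtot F) (SCtot F))
        (∑ A ∈ (Icc 1 (n : ℤ)).powerset,
          if Splits A lam then
            DeltaP F A.card (standardize A (restrictTo A lam)) ⊗ₜ[ℂ]
              Pelt F (n - A.card)
                (standardize (Icc 1 (n : ℤ) \ A) (restrictTo (Icc 1 (n : ℤ) \ A) lam))
          else (0 : (SCtot F ⊗[ℂ] SCtot F) ⊗[ℂ] SCtot F))
      = ∑ p ∈ (Icc 1 (n : ℤ)).powerset.sigma
            (fun A1 => ((Icc 1 (n : ℤ)) \ A1).powerset),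
          if Splits3 p.1 p.2 lam then
            Pelt F p.1.card (standardize p.1 (restrictTo p.1 lam)) ⊗ₜ[ℂ]
              (Pelt F p.2.card (standardize p.2 (restrictTo p.2 lam)) ⊗ₜ[ℂ]
                Pelt F ((Icc 1 (n : ℤ) \ p.1) \ p.2).card
                  (standardize ((Icc 1 (n : ℤ) \ p.1) \ p.2)
                    (restrictTo ((Icc 1 (n : ℤ) \ p.1) \ p.2) lam)))
          else 0 := by
    rw [map_sum]
    trans (∑ A ∈ (Icc 1 (n : ℤ)).powerset, ∑ B ∈ (Icc 1 (A.card : ℤ)).powerset,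
        if Splits A lam ∧ Splits B (standardize A (restrictTo A lam)) then
          Pelt F B.card
              (standardize B (restrictTo B (standardize A (restrictTo A lam)))) ⊗ₜ[ℂ]
            (Pelt F (A.card - B.card)
                (standardize (Icc 1 (A.card : ℤ) \ B)
                  (restrictTo (Icc 1 (A.card : ℤ) \ B)
                    (standardize A (restrictTo A lam)))) ⊗ₜ[ℂ]
              Pelt F (n - A.card)
                (standardize (Icc 1 (n : ℤ) \ A) (restrictTo (Icc 1 (n : ℤ) \ A) lam)))
        else 0)
    · refine Finset.sum_congr rfl fun A hA => ?_
      rw [DeltaP]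
      exact expand_left _ _ _ _ _ _
    rw [Finset.sum_sigma']
    refine Finset.sum_bij'
      (fun (p : Σ _ : Finset ℤ, Finset ℤ) _ => (⟨p.1.filter (fun a => rankIn p.1 a ∈ p.2),
        p.1 \ p.1.filter (fun a => rankIn p.1 a ∈ p.2)⟩ : Σ _ : Finset ℤ, Finset ℤ))
      (fun (q : Σ _ : Finset ℤ, Finset ℤ) _ => (⟨q.1 ∪ q.2, q.1.image (rankIn (q.1 ∪ q.2))⟩ : Σ _ : Finset ℤ, Finset ℤ))
      ?_ ?_ ?_ ?_ ?_
    · rintro ⟨A, B⟩ hp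
      rw [Finset.mem_sigma, Finset.mem_powerset, Finset.mem_powerset] at hp
      rw [Finset.mem_sigma, Finset.mem_powerset, Finset.mem_powerset]
      exact ⟨(Finset.filter_subset _ _).trans hp.1,
        Finset.sdiff_subset_sdiff hp.1 (Finset.Subset.refl _)⟩
    · rintro ⟨C1, C2⟩ hq
      rw [Finset.mem_sigma, Finset.mem_powerset, Finset.mem_powerset] at hq
      rw [Finset.mem_sigma, Finset.mem_powerset, Finset.mem_powerset]
      constructor
      · exact Finset.union_subset hq.1 (hq.2.trans Finset.sdiff_subset)
      · have hsub : C1 ⊆ C1 ∪ C2 := Finset.subset_union_left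
        dsimp only
        refine (Finset.image_subset_image hsub).trans ?_
        rw [image_rankIn]
    · rintro ⟨A, B⟩ hp
      rw [Finset.mem_sigma, Finset.mem_powerset, Finset.mem_powerset] at hp
      have h1 : A.filter (fun a => rankIn A a ∈ B) ⊆ A := Finset.filter_subset _ _
      have e1 : A.filter (fun a => rankIn A a ∈ B)
          ∪ (A \ A.filter (fun a => rankIn A a ∈ B)) = A :=
        Finset.union_sdiff_of_subset h1
      refine Sigma.ext e1 (heq_of_eq ?_)
      dsimp only
      rw [e1, up_sub hp.2]
    · rintro ⟨C1, C2⟩ hq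
      rw [Finset.mem_sigma, Finset.mem_powerset, Finset.mem_powerset] at hq
      have hdisj : Disjoint C1 C2 := by
        rw [Finset.disjoint_left]
        intro a ha1 ha2
        exact (Finset.mem_sdiff.mp (hq.2 ha2)).2 ha1
      have e1 : (C1 ∪ C2).filter
          (fun a => rankIn (C1 ∪ C2) a ∈ C1.image (rankIn (C1 ∪ C2))) = C1 :=
        sub_up Finset.subset_union_left
      refine Sigma.ext e1 (heq_of_eq ?_)
      dsimp only
      rw [e1, Finset.union_sdiff_cancel_left hdisj]
    · rintro ⟨A, B⟩ hp
      rw [Finset.mem_sigma, Finset.mem_powerset, Finset.mem_powerset] at hp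
      obtain ⟨hAI, hB⟩ := hp
      set A1 := A.filter (fun a => rankIn A a ∈ B) with hA1def
      have h1 : A1 ⊆ A := Finset.filter_subset _ _
      have hpos : ∀ x ∈ A, (0 : ℤ) < x := fun x hx => hIpos x (hAI hx)
      have hup : A1.image (rankIn A) = B := up_sub hB
      have hA2i : (A \ A1).image (rankIn A) = Icc 1 (A.card : ℤ) \ B := by
        rw [image_rankIn_sdiff h1, hup]
      have hcardB : B.card = A1.card := by rw [← hup, card_image_rankIn h1]
      have hcard2 : A.card - B.card = (A \ A1).card := by
        rw [hcardB, Finset.card_sdiff_of_subset h1]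
      have hX : standardize B (restrictTo B (standardize A (restrictTo A lam)))
          = standardize A1 (restrictTo A1 lam) := by
        rw [← hup]; exact standardize_restrict_comp hpos h1 lam
      have hY : standardize (Icc 1 (A.card : ℤ) \ B)
            (restrictTo (Icc 1 (A.card : ℤ) \ B) (standardize A (restrictTo A lam)))
          = standardize (A \ A1) (restrictTo (A \ A1) lam) := by
        rw [← hA2i]; exact standardize_restrict_comp hpos Finset.sdiff_subset lam
      have hZset : (Icc 1 (n : ℤ) \ A1) \ (A \ A1) = Icc 1 (n : ℤ) \ A := by
        ext x
        simp only [Finset.mem_sdiff]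
        constructor
        · rintro ⟨⟨hx, h1x⟩, h2x⟩
          exact ⟨hx, fun hxA => h2x ⟨hxA, h1x⟩⟩
        · rintro ⟨hx, hxA⟩
          exact ⟨⟨hx, fun hx1 => hxA (h1 hx1)⟩, fun hmem => hxA hmem.1⟩
      have hZcard : n - A.card = (Icc 1 (n : ℤ) \ A).card := by
        rw [Finset.card_sdiff_of_subset hAI, hIcard]
      have hcond : (Splits A lam ∧ Splits B (standardize A (restrictTo A lam)))
          ↔ Splits3 A1 (A \ A1) lam := by
        rw [← hup, splits_image_iff hpos h1 lam]
        have hAeq : A1 ∪ (A \ A1) = A := Finset.union_sdiff_of_subset h1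
        have hper : ∀ t : Arc F,
            (((|t.1| ∈ A) ↔ (|t.2.1| ∈ A)) ∧
              (|t.1| ∈ A → |t.2.1| ∈ A → ((|t.1| ∈ A1) ↔ (|t.2.1| ∈ A1)))) ↔
            ((|t.1| ∈ A1 ∧ |t.2.1| ∈ A1) ∨ (|t.1| ∈ A \ A1 ∧ |t.2.1| ∈ A \ A1) ∨
              (|t.1| ∉ A1 ∧ |t.1| ∉ A \ A1 ∧ |t.2.1| ∉ A1 ∧ |t.2.1| ∉ A \ A1)) := by
          intro t
          have m1 : |t.1| ∈ A1 ∪ (A \ A1) ↔ |t.1| ∈ A1 ∨ |t.1| ∈ A \ A1 :=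
            Finset.mem_union
          have m2 : |t.2.1| ∈ A1 ∪ (A \ A1) ↔ |t.2.1| ∈ A1 ∨ |t.2.1| ∈ A \ A1 :=
            Finset.mem_union
          rw [hAeq] at m1 m2
          have d1 : ¬(|t.1| ∈ A1 ∧ |t.1| ∈ A \ A1) :=
            fun hx => (Finset.mem_sdiff.mp hx.2).2 hx.1
          have d2 : ¬(|t.2.1| ∈ A1 ∧ |t.2.1| ∈ A \ A1) :=
            fun hx => (Finset.mem_sdiff.mp hx.2).2 hx.1
          exact cls_iff_left m1 m2 d1 d2
        unfold Splits Splits3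
        constructor
        · rintro ⟨hs, hb⟩ t ht
          exact (hper t).mp ⟨hs t ht, hb t ht⟩
        · intro h3
          exact ⟨fun t ht => ((hper t).mpr (h3 t ht)).1,
                 fun t ht => ((hper t).mpr (h3 t ht)).2⟩
      dsimp only
      rw [hcard2, hcardB, hX, hY, hZcard, ← hZset]
      exact if_congr hcond rfl rfl
  have hR :
      (∑ A ∈ (Icc 1 (n : ℤ)).powerset,
        if Splits A lam then
          Pelt F A.card (standardize A (restrictTo A lam)) ⊗ₜ[ℂ]
            DeltaP F (n - A.card)
              (standardize (Icc 1 (n : ℤ) \ A) (restrictTo (Icc 1 (n : ℤ) \ A) lam))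
        else (0 : SCtot F ⊗[ℂ] (SCtot F ⊗[ℂ] SCtot F)))
      = ∑ p ∈ (Icc 1 (n : ℤ)).powerset.sigma
            (fun A1 => ((Icc 1 (n : ℤ)) \ A1).powerset),
          if Splits3 p.1 p.2 lam then
            Pelt F p.1.card (standardize p.1 (restrictTo p.1 lam)) ⊗ₜ[ℂ]
              (Pelt F p.2.card (standardize p.2 (restrictTo p.2 lam)) ⊗ₜ[ℂ]
                Pelt F ((Icc 1 (n : ℤ) \ p.1) \ p.2).card
                  (standardize ((Icc 1 (n : ℤ) \ p.1) \ p.2)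
                    (restrictTo ((Icc 1 (n : ℤ) \ p.1) \ p.2) lam)))
          else 0 := by
    trans (∑ A ∈ (Icc 1 (n : ℤ)).powerset,
        ∑ B ∈ (Icc 1 ((n - A.card : ℕ) : ℤ)).powerset,
        if Splits A lam ∧ Splits B
            (standardize (Icc 1 (n : ℤ) \ A) (restrictTo (Icc 1 (n : ℤ) \ A) lam)) then
          Pelt F A.card (standardize A (restrictTo A lam)) ⊗ₜ[ℂ]
            (Pelt F B.card
                (standardize B (restrictTo B
                  (standardize (Icc 1 (n : ℤ) \ A)
                    (restrictTo (Icc 1 (n : ℤ) \ A) lam)))) ⊗ₜ[ℂ]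
              Pelt F (n - A.card - B.card)
                (standardize (Icc 1 ((n - A.card : ℕ) : ℤ) \ B)
                  (restrictTo (Icc 1 ((n - A.card : ℕ) : ℤ) \ B)
                    (standardize (Icc 1 (n : ℤ) \ A)
                      (restrictTo (Icc 1 (n : ℤ) \ A) lam)))))
        else 0)
    · refine Finset.sum_congr rfl fun A hA => ?_
      rw [DeltaP]
      exact expand_right _ _ _ _ _ _
    rw [Finset.sum_sigma']
    refine Finset.sum_bij'
      (fun (p : Σ _ : Finset ℤ, Finset ℤ) _ => (⟨p.1, (Icc 1 (n : ℤ) \ p.1).filter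
        (fun a => rankIn (Icc 1 (n : ℤ) \ p.1) a ∈ p.2)⟩ : Σ _ : Finset ℤ, Finset ℤ))
      (fun (q : Σ _ : Finset ℤ, Finset ℤ) _ => (⟨q.1, q.2.image (rankIn (Icc 1 (n : ℤ) \ q.1))⟩ : Σ _ : Finset ℤ, Finset ℤ))
      ?_ ?_ ?_ ?_ ?_
    · rintro ⟨A, B⟩ hp
      rw [Finset.mem_sigma, Finset.mem_powerset, Finset.mem_powerset] at hp
      rw [Finset.mem_sigma, Finset.mem_powerset, Finset.mem_powerset]
      exact ⟨hp.1, Finset.filter_subset _ _⟩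
    · rintro ⟨C1, C2⟩ hq
      rw [Finset.mem_sigma, Finset.mem_powerset, Finset.mem_powerset] at hq
      rw [Finset.mem_sigma, Finset.mem_powerset, Finset.mem_powerset]
      refine ⟨hq.1, ?_⟩
      have hc : ((Icc 1 (n : ℤ) \ C1).card : ℤ) = ((n - C1.card : ℕ) : ℤ) := by
        rw [Finset.card_sdiff_of_subset hq.1, hIcard]
      refine (Finset.image_subset_image hq.2).trans ?_
      rw [image_rankIn, hc]
    · rintro ⟨A, B⟩ hp
      rw [Finset.mem_sigma, Finset.mem_powerset, Finset.mem_powerset] at hp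
      have hc : ((n - A.card : ℕ) : ℤ) = ((Icc 1 (n : ℤ) \ A).card : ℤ) := by
        rw [Finset.card_sdiff_of_subset hp.1, hIcard]
      have hB' : B ⊆ Icc 1 (((Icc 1 (n : ℤ) \ A).card : ℤ)) := by
        rw [← hc]; exact hp.2
      exact Sigma.ext rfl (heq_of_eq (up_sub hB'))
    · rintro ⟨C1, C2⟩ hq
      rw [Finset.mem_sigma, Finset.mem_powerset, Finset.mem_powerset] at hq
      exact Sigma.ext rfl (heq_of_eq (sub_up hq.2))
    · rintro ⟨A, B⟩ hp
      rw [Finset.mem_sigma, Finset.mem_powerset, Finset.mem_powerset] at hp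
      obtain ⟨hAI, hB⟩ := hp
      have hc : ((n - A.card : ℕ) : ℤ) = ((Icc 1 (n : ℤ) \ A).card : ℤ) := by
        rw [Finset.card_sdiff_of_subset hAI, hIcard]
      have hB' : B ⊆ Icc 1 (((Icc 1 (n : ℤ) \ A).card : ℤ)) := by
        rw [← hc]; exact hB
      set A2 := (Icc 1 (n : ℤ) \ A).filter
        (fun a => rankIn (Icc 1 (n : ℤ) \ A) a ∈ B) with hA2def
      have h2 : A2 ⊆ Icc 1 (n : ℤ) \ A := Finset.filter_subset _ _
      have hpos' : ∀ x ∈ Icc 1 (n : ℤ) \ A, (0 : ℤ) < x :=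
        fun x hx => hIpos x (Finset.sdiff_subset hx)
      have hup : A2.image (rankIn (Icc 1 (n : ℤ) \ A)) = B := up_sub hB'
      have hcardB : B.card = A2.card := by rw [← hup, card_image_rankIn h2]
      have hX : standardize B (restrictTo B
            (standardize (Icc 1 (n : ℤ) \ A) (restrictTo (Icc 1 (n : ℤ) \ A) lam)))
          = standardize A2 (restrictTo A2 lam) := by
        rw [← hup]; exact standardize_restrict_comp hpos' h2 lam
      have hIm : ((Icc 1 (n : ℤ) \ A) \ A2).image (rankIn (Icc 1 (n : ℤ) \ A))
          = Icc 1 ((n - A.card : ℕ) : ℤ) \ B := by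
        rw [image_rankIn_sdiff h2, hup, hc]
      have hZ : standardize (Icc 1 ((n - A.card : ℕ) : ℤ) \ B)
            (restrictTo (Icc 1 ((n - A.card : ℕ) : ℤ) \ B)
              (standardize (Icc 1 (n : ℤ) \ A) (restrictTo (Icc 1 (n : ℤ) \ A) lam)))
          = standardize ((Icc 1 (n : ℤ) \ A) \ A2)
              (restrictTo ((Icc 1 (n : ℤ) \ A) \ A2) lam) := by
        rw [← hIm]; exact standardize_restrict_comp hpos' Finset.sdiff_subset lam
      have hZcard : n - A.card - B.card = ((Icc 1 (n : ℤ) \ A) \ A2).card := by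
        have e1 : ((Icc 1 (n : ℤ) \ A) \ A2).card = (Icc 1 (n : ℤ) \ A).card - A2.card :=
          Finset.card_sdiff_of_subset h2
        have e2 : (Icc 1 (n : ℤ) \ A).card = n - A.card := by
          rw [Finset.card_sdiff_of_subset hAI, hIcard]
        omega
      have hcond : (Splits A lam ∧ Splits B
            (standardize (Icc 1 (n : ℤ) \ A) (restrictTo (Icc 1 (n : ℤ) \ A) lam)))
          ↔ Splits3 A A2 lam := by
        rw [← hup, splits_image_iff hpos' h2 lam]
        unfold Splits Splits3
        have hper : ∀ t ∈ lam,
            (((|t.1| ∈ A) ↔ (|t.2.1| ∈ A)) ∧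
              (|t.1| ∈ Icc 1 (n : ℤ) \ A → |t.2.1| ∈ Icc 1 (n : ℤ) \ A →
                ((|t.1| ∈ A2) ↔ (|t.2.1| ∈ A2)))) ↔
            ((|t.1| ∈ A ∧ |t.2.1| ∈ A) ∨ (|t.1| ∈ A2 ∧ |t.2.1| ∈ A2) ∨
              (|t.1| ∉ A ∧ |t.1| ∉ A2 ∧ |t.2.1| ∉ A ∧ |t.2.1| ∉ A2)) := by
          intro t ht
          have m1 : |t.1| ∈ Icc 1 (n : ℤ) \ A ↔ ¬ |t.1| ∈ A := by
            simp [Finset.mem_sdiff, (harcs t ht).1]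
          have m2 : |t.2.1| ∈ Icc 1 (n : ℤ) \ A ↔ ¬ |t.2.1| ∈ A := by
            simp [Finset.mem_sdiff, (harcs t ht).2]
          have d1 : |t.1| ∈ A2 → |t.1| ∉ A := fun hx => (Finset.mem_sdiff.mp (h2 hx)).2
          have d2 : |t.2.1| ∈ A2 → |t.2.1| ∉ A := fun hx => (Finset.mem_sdiff.mp (h2 hx)).2
          rw [m1, m2]
          exact cls_iff_right d1 d2
        constructor
        · rintro ⟨hs, hb⟩ t ht
          exact (hper t ht).mp ⟨hs t ht, hb t ht⟩
        · intro h3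
          exact ⟨fun t ht => ((hper t ht).mpr (h3 t ht)).1,
                 fun t ht => ((hper t ht).mpr (h3 t ht)).2⟩
      dsimp only
      rw [hZcard, hcardB, hX, hZ]
      exact if_congr hcond rfl rfl
  rw [hL, hR]
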